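/- The free weight sequence is a valid representation for free trees: any two free trees of the same order with the same free weight sequence are isomorphic. -/

import Mathlib

inductive OTree : Type
  | node : List OTree → OTree

namespace OTree

def size : OTree → ℕ
  | .node cs => (cs.attach.map (fun c => size c.1)).sum + 1
decreasing_by simp only [OTree.node.sizeOf_spec]; have := List.sizeOf_lt_of_mem c.2; omega

def ws : OTree → List ℕ
  | .node cs => size (.node cs) :: (cs.attach.map (fun c => ws c.1)).flatten
decreasing_by simp only [OTree.node.sizeOf_spec]; have := List.sizeOf_lt_of_mem c.2; omega

def preorder : OTree → List OTree
  | .node cs => .node cs :: (cs.attach.map (fun c => preorder c.1)).flatten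
decreasing_by simp only [OTree.node.sizeOf_spec]; have := List.sizeOf_lt_of_mem c.2; omega

lemma size_pos (R : OTree) : 0 < R.size := by
  cases R with | node cs => simp only [OTree.size]; omega

lemma ws_node (cs : List OTree) : ws (.node cs) = size (.node cs) :: (cs.map ws).flatten := by
  rw [ws, List.attach_map_val]

lemma size_node (cs : List OTree) : size (.node cs) = (cs.map size).sum + 1 := by
  rw [size, List.attach_map_val]

lemma ws_head (R : OTree) : ∃ t, R.ws = R.size :: t := by
  cases R with | node cs => exact ⟨_, ws_node cs⟩

lemma ws_length_aux : ∀ n (R : OTree), sizeOf R ≤ n → R.ws.length = R.size := by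
  intro n
  induction n with
  | zero => intro R h; cases R with | node cs => simp at h
  | succ n ih =>
    intro R h
    cases R with
    | node cs =>
      rw [ws_node, size_node]
      simp only [List.length_cons, List.length_flatten, List.map_map]
      have heq : cs.map (List.length ∘ ws) = cs.map size := by
        apply List.map_congr_left
        intro c hc
        have h1 : sizeOf c < sizeOf (OTree.node cs) := by
          simp only [OTree.node.sizeOf_spec]; have := List.sizeOf_lt_of_mem hc; omega
        exact ih c (by omega)
      rw [heq]

lemma ws_length (R : OTree) : R.ws.length = R.size := ws_length_aux _ R le_rfl

lemma ws_inj_aux : ∀ n (R S : OTree), sizeOf R ≤ n → R.ws = S.ws → R = S := by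
  intro n
  induction n with
  | zero => intro R S h; cases R with | node cs => rw [OTree.node.sizeOf_spec] at h; omega
  | succ n ih =>
    intro R S hs hws
    cases R with | node cs =>
    cases S with | node cs' =>
    rw [ws_node, ws_node, List.cons.injEq] at hws
    obtain ⟨-, hflat⟩ := hws
    have hmem : ∀ c ∈ cs, sizeOf c ≤ n := by
      intro c hc
      have h1 : sizeOf (OTree.node cs) = 1 + sizeOf cs := OTree.node.sizeOf_spec cs
      have := List.sizeOf_lt_of_mem hc; omega
    congr 1
    clear hs
    induction cs generalizing cs' with
    | nil =>
      cases cs' with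
      | nil => rfl
      | cons c' t' =>
        exfalso
        obtain ⟨t, ht⟩ := ws_head c'
        simp [ht] at hflat
    | cons c t iht =>
      cases cs' with
      | nil =>
        exfalso
        obtain ⟨tt, ht⟩ := ws_head c
        simp [ht] at hflat
      | cons c' t' =>
        simp only [List.map_cons, List.flatten_cons] at hflat
        have hlen : c.ws.length = c'.ws.length := by
          obtain ⟨a, ha⟩ := ws_head c
          obtain ⟨a', ha'⟩ := ws_head c'
          have hsz : c.size = c'.size := by
            have := congrArg List.head? hflat
            simp [ha, ha'] at this
            exact this
          rw [ws_length, ws_length, hsz]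
        obtain ⟨h1, h2⟩ := List.append_inj hflat hlen
        have hc : c = c' := ih c c' (hmem c (by simp)) h1
        rw [hc, iht t' h2 (fun x hx => hmem x (by simp [hx]))]

lemma ws_inj {R S : OTree} (h : R.ws = S.ws) : R = S := ws_inj_aux _ R S le_rfl h

end OTree

inductive RIso : OTree → OTree → Prop
  | node {cs cs' : List OTree} (l : List OTree) (hp : l.Perm cs')
      (hlen : cs.length = l.length)
      (h : ∀ (i : ℕ) (h1 : i < cs.length) (h2 : i < l.length), RIso cs[i] l[i]) :
      RIso (.node cs) (.node cs')

inductive Canonical : OTree → Prop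
  | node {cs : List OTree}
      (hchain : List.Chain' (fun u v => OTree.ws v ≤ OTree.ws u) cs)
      (h : ∀ c ∈ cs, Canonical c) : Canonical (.node cs)

def Centroidal {V : Type} [Fintype V] (G : SimpleGraph V) (u : V) : Prop :=
  ∀ v : ↥{x : V | x ≠ u},
    2 * Nat.card {w : ↥{x : V | x ≠ u} | (G.induce {x : V | x ≠ u}).Reachable v w}
      ≤ Fintype.card V

def IsParent (w : List ℕ) (i j : ℕ) : Prop :=
  i < j ∧ j < i + w.getD i 0 ∧ ∀ k, i < k → k < j → ¬ (j < k + w.getD k 0)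

def graphOf (R : OTree) : SimpleGraph (Fin R.size) :=
  SimpleGraph.fromRel (fun i j => IsParent R.ws i.1 j.1)

def rootIdx (R : OTree) : Fin R.size := ⟨0, R.size_pos⟩

def B (n : ℕ) : Set (List ℕ) := {s | ∃ R : OTree, Canonical R ∧ R.size = n ∧ R.ws = s}

def Succeq (s t : List ℕ) : Prop := t ≤ s ∨ s <+: t

def A (q n : ℕ) : Set (List ℕ × List ℕ) :=
  {p | p.1 ∈ B q ∧ p.2 ∈ B (n - q) ∧ Succeq p.1 p.2.tail}


def FwsUni {V : Type} [Fintype V] (G : SimpleGraph V) (s : List ℕ) : Prop :=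
  ∃ R : OTree, Canonical R ∧ R.ws = s ∧
    ∃ f : graphOf R ≃g G, Centroidal G (f (rootIdx R))

def FwsBi {V : Type} [Fintype V] (G : SimpleGraph V) (s : List ℕ) : Prop :=
  ∃ u v, u ≠ v ∧ G.Adj u v ∧ Centroidal G u ∧ Centroidal G v ∧
  ∃ A B : OTree, Canonical A ∧ Canonical B ∧ B.ws ≤ A.ws ∧ s = A.ws ++ B.ws ∧
  ∃ (fA : graphOf A ≃g (G.deleteEdges {s(u,v)}).induce
        {x | (G.deleteEdges {s(u,v)}).Reachable u x})
    (fB : graphOf B ≃g (G.deleteEdges {s(u,v)}).induce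
        {x | (G.deleteEdges {s(u,v)}).Reachable v x}),
    (fA (rootIdx A)).1 = u ∧ (fB (rootIdx B)).1 = v


open SimpleGraph

lemma glue {V V' : Type} (G : SimpleGraph V) (G' : SimpleGraph V')
    (H : SimpleGraph V) (H' : SimpleGraph V')
    (hHG : H ≤ G) (hH'G' : H' ≤ G')
    (u v : V) (u' v' : V') (huv : G.Adj u v) (huv' : G'.Adj u' v')
    (hedge : ∀ x y, G.Adj x y → H.Adj x y ∨ (x = u ∧ y = v) ∨ (x = v ∧ y = u))
    (hedge' : ∀ x y, G'.Adj x y → H'.Adj x y ∨ (x = u' ∧ y = v') ∨ (x = v' ∧ y = u'))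
    (hbr : ¬ H.Reachable u v) (hbr' : ¬ H'.Reachable u' v')
    (hcov : ∀ x, H.Reachable u x ∨ H.Reachable v x)
    (hcov' : ∀ x, H'.Reachable u' x ∨ H'.Reachable v' x)
    (g1 : H.induce {x | H.Reachable u x} ≃g H'.induce {x | H'.Reachable u' x})
    (g2 : H.induce {x | H.Reachable v x} ≃g H'.induce {x | H'.Reachable v' x})
    (hu : (g1 ⟨u, Reachable.refl u⟩).1 = u') (hv : (g2 ⟨v, Reachable.refl v⟩).1 = v') :
    Nonempty (G ≃g G') := by
  classical
  have hdis : ∀ x, H.Reachable u x → H.Reachable v x → False :=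
    fun x h1 h2 => hbr (h1.trans h2.symm)
  have hdis' : ∀ x, H'.Reachable u' x → H'.Reachable v' x → False :=
    fun x h1 h2 => hbr' (h1.trans h2.symm)
  let φ : V → V' := fun x =>
    if h : H.Reachable u x then (g1 ⟨x, h⟩).1 else (g2 ⟨x, (hcov x).resolve_left h⟩).1
  let ψ : V' → V := fun y =>
    if h : H'.Reachable u' y then (g1.symm ⟨y, h⟩).1 else (g2.symm ⟨y, (hcov' y).resolve_left h⟩).1
  have hφu : ∀ x (h : H.Reachable u x), φ x = (g1 ⟨x, h⟩).1 := fun x h => dif_pos h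
  have hφv : ∀ x (h : H.Reachable v x), φ x = (g2 ⟨x, h⟩).1 := by
    intro x h
    exact dif_neg (fun h' => hdis x h' h)
  have hψu : ∀ y (h : H'.Reachable u' y), ψ y = (g1.symm ⟨y, h⟩).1 := fun y h => dif_pos h
  have hψv : ∀ y (h : H'.Reachable v' y), ψ y = (g2.symm ⟨y, h⟩).1 := by
    intro y h
    exact dif_neg (fun h' => hdis' y h' h)
  have hli : Function.LeftInverse ψ φ := by
    intro x
    by_cases h : H.Reachable u x
    · rw [hφu x h, hψu _ (g1 ⟨x, h⟩).2]
      have e : (⟨(g1 ⟨x, h⟩).1, (g1 ⟨x, h⟩).2⟩ : {y | H'.Reachable u' y}) = g1 ⟨x, h⟩ := rfl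
      rw [e, RelIso.symm_apply_apply]
    · have hx : H.Reachable v x := (hcov x).resolve_left h
      rw [hφv x hx, hψv _ (g2 ⟨x, hx⟩).2]
      have e : (⟨(g2 ⟨x, hx⟩).1, (g2 ⟨x, hx⟩).2⟩ : {y | H'.Reachable v' y}) = g2 ⟨x, hx⟩ := rfl
      rw [e, RelIso.symm_apply_apply]
  have hri : Function.RightInverse ψ φ := by
    intro y
    by_cases h : H'.Reachable u' y
    · rw [hψu y h, hφu _ (g1.symm ⟨y, h⟩).2]
      have e : (⟨(g1.symm ⟨y, h⟩).1, (g1.symm ⟨y, h⟩).2⟩ : {x | H.Reachable u x}) = g1.symm ⟨y, h⟩ := rfl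
      rw [e, RelIso.apply_symm_apply]
    · have hy : H'.Reachable v' y := (hcov' y).resolve_left h
      rw [hψv y hy, hφv _ (g2.symm ⟨y, hy⟩).2]
      have e : (⟨(g2.symm ⟨y, hy⟩).1, (g2.symm ⟨y, hy⟩).2⟩ : {x | H.Reachable v x}) = g2.symm ⟨y, hy⟩ := rfl
      rw [e, RelIso.apply_symm_apply]
  let eqv : V ≃ V' := ⟨φ, ψ, hli, hri⟩
  have hφuval : φ u = u' := by rw [hφu u (Reachable.refl u)]; exact hu
  have hφvval : φ v = v' := by rw [hφv v (Reachable.refl v)]; exact hv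
  have hφSU : ∀ x (h : H.Reachable u x), H'.Reachable u' (φ x) := by
    intro x h; rw [hφu x h]; exact (g1 ⟨x, h⟩).2
  have hφSV : ∀ x (h : H.Reachable v x), H'.Reachable v' (φ x) := by
    intro x h; rw [hφv x h]; exact (g2 ⟨x, h⟩).2
  refine ⟨⟨eqv, ?_⟩⟩
  intro x y
  show G'.Adj (φ x) (φ y) ↔ G.Adj x y
  have hinj : ∀ a b, φ a = φ b → a = b := fun a b hab => eqv.injective hab
  have key : ∀ x y, G.Adj x y → G'.Adj (φ x) (φ y) := by
    intro x y hxy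
    rcases hedge x y hxy with hH1 | ⟨rfl, rfl⟩ | ⟨rfl, rfl⟩
    · rcases hcov x with hx | hx
      · have hy : H.Reachable u y := hx.trans hH1.reachable
        have h1 : (H'.induce {z | H'.Reachable u' z}).Adj (g1 ⟨x, hx⟩) (g1 ⟨y, hy⟩) :=
          g1.map_adj_iff.mpr hH1
        rw [hφu x hx, hφu y hy]
        exact hH'G' h1
      · have hy : H.Reachable v y := hx.trans hH1.reachable
        have h1 : (H'.induce {z | H'.Reachable v' z}).Adj (g2 ⟨x, hx⟩) (g2 ⟨y, hy⟩) :=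
          g2.map_adj_iff.mpr hH1
        rw [hφv x hx, hφv y hy]
        exact hH'G' h1
    · rw [hφuval, hφvval]; exact huv'
    · rw [hφvval, hφuval]; exact huv'.symm
  have key' : ∀ x y, G'.Adj (φ x) (φ y) → G.Adj x y := by
    intro x y hxy
    rcases hedge' (φ x) (φ y) hxy with hH1 | ⟨hx, hy⟩ | ⟨hx, hy⟩
    · rcases hcov x with hx | hx
      · have hφx := hφSU x hx
        have hφy : H'.Reachable u' (φ y) := hφx.trans hH1.reachable
        have hyU : H.Reachable u y := by
          rcases hcov y with hh | hh
          · exact hh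
          · exact absurd (hφSV y hh) (fun hc => hdis' (φ y) hφy hc)
        have h2 : (H'.induce {z | H'.Reachable u' z}).Adj (g1 ⟨x, hx⟩) (g1 ⟨y, hyU⟩) := by
          show H'.Adj (g1 ⟨x, hx⟩).1 (g1 ⟨y, hyU⟩).1
          rw [← hφu x hx, ← hφu y hyU]; exact hH1
        exact hHG (g1.map_adj_iff.mp h2)
      · have hφx := hφSV x hx
        have hφy : H'.Reachable v' (φ y) := hφx.trans hH1.reachable
        have hyV : H.Reachable v y := by
          rcases hcov y with hh | hh
          · exact absurd (hφSU y hh) (fun hc => hdis' (φ y) hc hφy)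
          · exact hh
        have h2 : (H'.induce {z | H'.Reachable v' z}).Adj (g2 ⟨x, hx⟩) (g2 ⟨y, hyV⟩) := by
          show H'.Adj (g2 ⟨x, hx⟩).1 (g2 ⟨y, hyV⟩).1
          rw [← hφv x hx, ← hφv y hyV]; exact hH1
        exact hHG (g2.map_adj_iff.mp h2)
    · have hx1 : x = u := hinj x u (by rw [hφuval]; exact hx)
      have hy1 : y = v := hinj y v (by rw [hφvval]; exact hy)
      subst hx1; subst hy1; exact huv
    · have hx1 : x = v := hinj x v (by rw [hφvval]; exact hx)
      have hy1 : y = u := hinj y u (by rw [hφuval]; exact hy)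
      subst hx1; subst hy1; exact huv.symm
  exact ⟨key' x y, key x y⟩

lemma tree_bridge {V : Type} (G : SimpleGraph V) (hG : G.IsTree) {u v : V} (huv : G.Adj u v) :
    ¬ (G.deleteEdges {s(u,v)}).Reachable u v := by
  have hb := (SimpleGraph.isAcyclic_iff_forall_edge_isBridge.mp hG.2) (G.mem_edgeSet.mpr huv)
  exact SimpleGraph.isBridge_iff.mp hb

lemma tree_edgechar {V : Type} (G : SimpleGraph V) (u v : V) :
    ∀ x y, G.Adj x y →
      (G.deleteEdges {s(u,v)}).Adj x y ∨ (x = u ∧ y = v) ∨ (x = v ∧ y = u) := by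
  intro x y hxy
  by_cases he : s(x,y) = s(u,v)
  · right; exact Sym2.eq_iff.mp he
  · left; rw [SimpleGraph.deleteEdges_adj]; exact ⟨hxy, by simpa using he⟩

lemma tree_cover {V : Type} (G : SimpleGraph V) (hG : G.IsTree) {u v : V} (huv : G.Adj u v) :
    ∀ x, (G.deleteEdges {s(u,v)}).Reachable u x ∨ (G.deleteEdges {s(u,v)}).Reachable v x := by
  intro x
  obtain ⟨w⟩ : G.Reachable u x := hG.1 u x
  suffices h : ∀ (a b : V) (w : G.Walk a b),
      ((G.deleteEdges {s(u,v)}).Reachable u a ∨ (G.deleteEdges {s(u,v)}).Reachable v a) →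
      ((G.deleteEdges {s(u,v)}).Reachable u b ∨ (G.deleteEdges {s(u,v)}).Reachable v b) by
    exact h u x w (Or.inl (Reachable.refl u))
  intro a b w
  induction w with
  | nil => exact id
  | @cons a c b hadj p ih =>
    intro ha
    apply ih
    by_cases he : s(a,c) = s(u,v)
    · rcases Sym2.eq_iff.mp he with ⟨-, rfl⟩ | ⟨-, rfl⟩
      · exact Or.inr (Reachable.refl _)
      · exact Or.inl (Reachable.refl _)
    · have hH : (G.deleteEdges {s(u,v)}).Adj a c := by
        rw [SimpleGraph.deleteEdges_adj]; exact ⟨hadj, by simpa using he⟩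
      exact ha.imp (fun h => h.trans hH.reachable) (fun h => h.trans hH.reachable)

lemma bi_head_lt {V : Type} [Fintype V] (G : SimpleGraph V) (hG : G.IsTree)
    {s : List ℕ} (hbi : FwsBi G s) :
    ∃ a t, s = a :: t ∧ a < Fintype.card V := by
  obtain ⟨u, v, hne, hadj, -, -, A, B, -, -, -, hs, fA, fB, hfa, hfb⟩ := hbi
  obtain ⟨tA, htA⟩ := A.ws_head
  refine ⟨A.size, tA ++ B.ws, by rw [hs, htA]; rfl, ?_⟩
  have hAcard : Nat.card {x | (G.deleteEdges {s(u,v)}).Reachable u x} = A.size :=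
    Nat.card_eq_of_equiv_fin fA.toEquiv.symm
  have hbr := tree_bridge G hG hadj
  have hss : {x | (G.deleteEdges {s(u,v)}).Reachable u x} ⊂ Set.univ := by
    refine (Set.ssubset_univ_iff).mpr (fun hc => hbr ?_)
    have : v ∈ {x | (G.deleteEdges {s(u,v)}).Reachable u x} := by rw [hc]; trivial
    exact this
  have hlt := Set.ncard_lt_ncard hss (Set.toFinite _)
  rw [Set.ncard_univ] at hlt
  rw [← Nat.card_coe_set_eq, hAcard] at hlt
  rwa [Nat.card_eq_fintype_card] at hlt

lemma uni_head {V : Type} [Fintype V] (G : SimpleGraph V)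
    {s : List ℕ} (huni : FwsUni G s) :
    ∃ t, s = Fintype.card V :: t ∧ ∀ {V' : Type} [Fintype V'] (G' : SimpleGraph V'),
      Fintype.card V = Fintype.card V' → FwsUni G' s → Nonempty (G ≃g G') := by
  obtain ⟨R, hcan, hws, f, -⟩ := huni
  obtain ⟨t, ht⟩ := R.ws_head
  have hcardV : Fintype.card V = R.size := by
    rw [← Fintype.card_fin R.size]
    exact Fintype.card_congr f.toEquiv.symm
  refine ⟨t, by rw [← hws, ht, hcardV], ?_⟩
  intro V' _ G' hc huni'
  obtain ⟨R', hcan', hws', f', -⟩ := huni'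
  have : R = R' := OTree.ws_inj (by rw [hws, hws'])
  subst this
  exact ⟨f.symm.trans f'⟩

lemma bi_bi {V V' : Type} [Fintype V] [Fintype V'] (G : SimpleGraph V) (G' : SimpleGraph V')
    (hG : G.IsTree) (hG' : G'.IsTree) {s : List ℕ}
    (hbi : FwsBi G s) (hbi' : FwsBi G' s) : Nonempty (G ≃g G') := by
  obtain ⟨u, v, hne, hadj, -, -, TA, TB, -, -, -, hs, fA, fB, hfa, hfb⟩ := hbi
  obtain ⟨u', v', hne', hadj', -, -, TA', TB', -, -, -, hs', fA', fB', hfa', hfb'⟩ := hbi'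
  -- identify the trees
  have hwseq : TA.ws ++ TB.ws = TA'.ws ++ TB'.ws := by rw [← hs, ← hs']
  have hszA : TA.size = TA'.size := by
    obtain ⟨tA, htA⟩ := TA.ws_head
    obtain ⟨tA', htA'⟩ := TA'.ws_head
    have := congrArg List.head? hwseq
    rw [htA, htA'] at this
    simpa using this
  have hlenA : TA.ws.length = TA'.ws.length := by
    rw [OTree.ws_length, OTree.ws_length, hszA]
  obtain ⟨h1, h2⟩ := List.append_inj hwseq hlenA
  have hA : TA = TA' := OTree.ws_inj h1
  have hB : TB = TB' := OTree.ws_inj h2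
  subst hA; subst hB
  -- build component isomorphisms
  have hfaroot : fA (rootIdx TA) = ⟨u, Reachable.refl u⟩ := Subtype.ext hfa
  have hfbroot : fB (rootIdx TB) = ⟨v, Reachable.refl v⟩ := Subtype.ext hfb
  have hfaroot' : fA' (rootIdx TA) = ⟨u', Reachable.refl u'⟩ := Subtype.ext hfa'
  have hfbroot' : fB' (rootIdx TB) = ⟨v', Reachable.refl v'⟩ := Subtype.ext hfb'
  refine glue G G' (G.deleteEdges {s(u,v)}) (G'.deleteEdges {s(u',v')})
    (SimpleGraph.deleteEdges_le _) (SimpleGraph.deleteEdges_le _)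
    u v u' v' hadj hadj' (tree_edgechar G u v) (tree_edgechar G' u' v')
    (tree_bridge G hG hadj) (tree_bridge G' hG' hadj')
    (tree_cover G hG hadj) (tree_cover G' hG' hadj')
    (fA.symm.trans fA') (fB.symm.trans fB') ?_ ?_
  · show (fA' (fA.symm ⟨u, Reachable.refl u⟩)).1 = u'
    rw [← hfaroot, RelIso.symm_apply_apply, hfaroot']
  · show (fB' (fB.symm ⟨v, Reachable.refl v⟩)).1 = v'
    rw [← hfbroot, RelIso.symm_apply_apply, hfbroot']

def Fws {V : Type} [Fintype V] (G : SimpleGraph V) (s : List ℕ) : Prop :=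
  ((∃! u, Centroidal G u) ∧ FwsUni G s) ∨ ((¬ ∃! u, Centroidal G u) ∧ FwsBi G s)

theorem stmt12 {V V' : Type} [Fintype V] [Fintype V']
    (G : SimpleGraph V) (G' : SimpleGraph V') (hG : G.IsTree) (hG' : G'.IsTree)
    (hcard : Fintype.card V = Fintype.card V')
    (s : List ℕ) (h : Fws G s) (h' : Fws G' s) : Nonempty (G ≃g G') := by
  rcases h with ⟨-, huni⟩ | ⟨-, hbi⟩
  · rcases h' with ⟨-, huni'⟩ | ⟨-, hbi'⟩
    · obtain ⟨t, -, hmain⟩ := uni_head G huni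
      exact hmain G' hcard huni'
    · exfalso
      obtain ⟨t, hst, -⟩ := uni_head G huni
      obtain ⟨a, t', hst', hlt⟩ := bi_head_lt G' hG' hbi'
      rw [hst] at hst'
      rw [← hcard] at hlt
      cases hst'
      omega
  · rcases h' with ⟨-, huni'⟩ | ⟨-, hbi'⟩
    · exfalso
      obtain ⟨t, hst, -⟩ := uni_head G' huni'
      obtain ⟨a, t', hst', hlt⟩ := bi_head_lt G hG hbi
      rw [hst] at hst'
      rw [hcard] at hlt
      cases hst'
      omega
    · exact bi_bi G G' hG hG' hbi hbi'
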